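/- A digraph H is isomorphic to ADC⁻(G) for some mixed graph G if and only if H is strongly bipartite and has no isolated vertices, i.e. no vertex of H has both an incoming arc and an outgoing arc, and every vertex of H has at least one incident arc. Moreover, in that case one may take G = H, i.e. H ≅ ADC⁻(H). -/

import Mathlib

universe u

/-- The vertex set of the alternating double cover of `G = (V, A)` with isolated
vertices removed: pairs `(u, false)` with `u` having an outgoing arc and pairs
`(v, true)` with `v` having an incoming arc. -/
def ADCm {V : Type u} (A : V → V → Prop) : Type u :=
  {p : V × Bool // (p.2 = false ∧ ∃ y, A p.1 y) ∨ (p.2 = true ∧ ∃ x, A x p.1)}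

/-- The arcs of the alternating double cover with isolated vertices removed:
`((u, false), (v, true))` for each arc `(u, v)` of `G`. -/
def ADCmArc {V : Type u} (A : V → V → Prop) : ADCm A → ADCm A → Prop :=
  fun p q => p.val.2 = false ∧ q.val.2 = true ∧ A p.val.1 q.val.1

/-- a digraph `H` is isomorphic to `ADC⁻(G)` for some mixed graph `G`
iff `H` is strongly bipartite (no vertex has both an incoming and an outgoing arc)
and has no isolated vertices; moreover, in that case `H ≅ ADC⁻(H)`. -/
theorem stmt_15 {U : Type u} (B : U → U → Prop) :
    ((∃ (V : Type u) (A : V → V → Prop) (e : U ≃ ADCm A),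
        ∀ u v, B u v ↔ ADCmArc A (e u) (e v)) ↔
      ((∀ w, ¬ ((∃ x, B x w) ∧ (∃ y, B w y))) ∧
        (∀ w, (∃ x, B x w) ∨ (∃ y, B w y)))) ∧
    (((∀ w, ¬ ((∃ x, B x w) ∧ (∃ y, B w y))) ∧
        (∀ w, (∃ x, B x w) ∨ (∃ y, B w y))) →
      ∃ e : U ≃ ADCm B, ∀ u v, B u v ↔ ADCmArc B (e u) (e v)) := by
  classical
  have main : (((∀ w, ¬ ((∃ x, B x w) ∧ (∃ y, B w y))) ∧
        (∀ w, (∃ x, B x w) ∨ (∃ y, B w y))) →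
      ∃ e : U ≃ ADCm B, ∀ u v, B u v ↔ ADCmArc B (e u) (e v)) := by
    rintro ⟨hsb, hni⟩
    let f : U → ADCm B := fun u =>
      if h : ∃ x, B x u then ⟨(u, true), Or.inr ⟨rfl, h⟩⟩
      else ⟨(u, false), Or.inl ⟨rfl, (hni u).resolve_left h⟩⟩
    have hft : ∀ u (h : ∃ x, B x u), f u = ⟨(u, true), Or.inr ⟨rfl, h⟩⟩ := by
      intro u h; simp only [f]; exact dif_pos h
    have hff : ∀ u (h : ¬ ∃ x, B x u),
        f u = ⟨(u, false), Or.inl ⟨rfl, (hni u).resolve_left h⟩⟩ := by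
      intro u h; simp only [f]; exact dif_neg h
    have hf1 : ∀ u, (f u).val.1 = u := by
      intro u
      by_cases h : ∃ x, B x u
      · rw [hft u h]
      · rw [hff u h]
    refine ⟨⟨f, fun p => p.val.1, hf1, ?_⟩, ?_⟩
    · rintro ⟨⟨u, b⟩, hp⟩
      rcases hp with ⟨hb, hout⟩ | ⟨hb, hin⟩
      · have h : ¬ ∃ x, B x u := fun hx => hsb u ⟨hx, hout⟩
        apply Subtype.ext
        rw [hff u h]
        exact Prod.ext rfl hb.symm
      · apply Subtype.ext
        rw [hft u hin]
        exact Prod.ext rfl hb.symm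
    · intro u v
      constructor
      · intro h
        have hv : ∃ x, B x v := ⟨u, h⟩
        have hu : ¬ ∃ x, B x u := fun hx => hsb u ⟨hx, v, h⟩
        show ADCmArc B (f u) (f v)
        rw [hff u hu, hft v hv]
        exact ⟨rfl, rfl, h⟩
      · intro h
        have h' : B (f u).val.1 (f v).val.1 := h.2.2
        show B u v
        rwa [hf1, hf1] at h'
  refine ⟨⟨?_, fun h => ?_⟩, main⟩
  · rintro ⟨V, A, e, he⟩
    constructor
    · rintro w ⟨⟨x, hx⟩, ⟨y, hy⟩⟩
      have h1 := ((he x w).1 hx).2.1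
      have h2 := ((he w y).1 hy).1
      rw [h1] at h2
      exact Bool.noConfusion h2
    · intro w
      rcases (e w).2 with ⟨hb, y, hy⟩ | ⟨hb, x, hx⟩
      · right
        refine ⟨e.symm ⟨(y, true), Or.inr ⟨rfl, (e w).val.1, hy⟩⟩, ?_⟩
        rw [he]; erw [e.apply_symm_apply]
        exact ⟨hb, rfl, hy⟩
      · left
        refine ⟨e.symm ⟨(x, false), Or.inl ⟨rfl, (e w).val.1, hx⟩⟩, ?_⟩
        rw [he]; erw [e.apply_symm_apply]
        exact ⟨rfl, hb, hx⟩
  · obtain ⟨e, he⟩ := main h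
    exact ⟨U, B, e, he⟩
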